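/- Let F_q be a finite field of odd order, n ≥ 2 odd, a_1,...,a_n ∈ F_q^*, b_1,...,b_n ∈ F_q not all zero, a_0, b_0 ∈ F_q. Set a = a_1···a_n, b = Σ b_i^2 a_i^{-1}, c = b_0^2 - a_0 b. If b ≠ 0 and c = 0, then the number of common solutions in F_q^n of a_1 x_1^2 + ... + a_n x_n^2 = a_0 and b_1 x_1 + ... + b_n x_n = b_0 equals q^{n-2} + q^{(n-3)/2} (q-1) χ((-1)^{(n-1)/2} a b), where χ is the quadratic character of F_q. -/

import Mathlib

open Finset

section Helpers

variable {F : Type*} [Field F] [Fintype F] [DecidableEq F]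

local notation "χ" => quadraticChar F
local notation "q" => (Fintype.card F : ℤ)

lemma chi_inv {α : F} (hα : α ≠ 0) : χ α⁻¹ = χ α := by
  have h1 : χ α * χ α⁻¹ = 1 := by
    rw [← map_mul, mul_inv_cancel₀ hα, map_one]
  have h2 : χ α * χ α = 1 := by rw [← sq]; exact quadraticChar_sq_one hα
  have hne : χ α ≠ 0 := by
    intro h; rw [h, zero_mul] at h2; exact one_ne_zero h2.symm
  exact mul_left_cancel₀ hne (h1.trans h2.symm)

lemma chi_sq_sum (hF2 : ringChar F ≠ 2) : ∑ c : F, χ c * χ c = q - 1 := by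
  have h : ∀ c : F, χ c * χ c = if c = 0 then 0 else 1 := by
    intro c
    by_cases hc : c = 0
    · simp [hc]
    · rw [if_neg hc, ← sq, quadraticChar_sq_one hc]
  rw [Finset.sum_congr rfl fun c _ => h c]
  have : ∀ c : F, (if c = 0 then (0:ℤ) else 1) = 1 - (if c = 0 then 1 else 0) := by
    intro c; split <;> ring
  rw [Finset.sum_congr rfl fun c _ => this c, Finset.sum_sub_distrib]
  simp [Finset.card_univ]

/-- counting fibers of `x ↦ α x²`. -/
lemma sum_alpha_sq (hF2 : ringChar F ≠ 2) {α : F} (hα : α ≠ 0) (f : F → ℤ) :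
    ∑ x : F, f (α * x ^ 2)
      = (∑ u : F, f u) + χ α * ∑ u : F, χ u * f u := by
  have hcard : ∀ u : F, ((univ.filter fun x : F => α * x ^ 2 = u).card : ℤ)
      = 1 + χ α * χ u := by
    intro u
    have h1 : (univ.filter fun x : F => α * x ^ 2 = u)
        = {x : F | x ^ 2 = α⁻¹ * u}.toFinset := by
      ext x
      simp only [mem_filter, mem_univ, true_and, Set.mem_toFinset, Set.mem_setOf_eq]
      constructor
      · intro h; rw [← h]; field_simp
      · intro h; rw [h]; field_simp
    rw [h1, quadraticChar_card_sqrts hF2, map_mul, chi_inv hα]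
    ring
  calc ∑ x : F, f (α * x ^ 2)
      = ∑ x : F, ∑ u : F, if α * x ^ 2 = u then f u else 0 := by
        refine Finset.sum_congr rfl fun x _ => ?_
        simp
    _ = ∑ u : F, ∑ x : F, if α * x ^ 2 = u then f u else 0 := Finset.sum_comm
    _ = ∑ u : F, ((univ.filter fun x : F => α * x ^ 2 = u).card : ℤ) * f u := by
        refine Finset.sum_congr rfl fun u _ => ?_
        rw [Finset.sum_ite, Finset.sum_const, Finset.sum_const_zero, add_zero, nsmul_eq_mul]
    _ = ∑ u : F, (1 + χ α * χ u) * f u := by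
        exact Finset.sum_congr rfl fun u _ => by rw [hcard u]
    _ = (∑ u : F, f u) + χ α * ∑ u : F, χ u * f u := by
        rw [Finset.mul_sum, ← Finset.sum_add_distrib]
        exact Finset.sum_congr rfl fun u _ => by ring

lemma jacobi_sum (hF2 : ringChar F ≠ 2) (w : F) :
    ∑ c : F, χ c * χ (w - c) = χ (-1) * ((if w = 0 then q else 0) - 1) := by
  by_cases hw : w = 0
  · subst hw
    simp only [zero_sub, if_pos rfl]
    have h : ∀ c : F, χ c * χ (-c) = χ (-1) * (χ c * χ c) := by
      intro c
      rw [show (-c : F) = -1 * c by ring, map_mul]; ring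
    rw [Finset.sum_congr rfl fun c _ => h c, ← Finset.mul_sum, chi_sq_sum hF2]
    simp
  · rw [if_neg hw]
    have h0 : ∑ c : F, χ c * χ (w - c) = ∑ c ∈ univ.erase 0, χ c * χ (w - c) := by
      rw [← Finset.add_sum_erase univ _ (mem_univ (0:F))]
      simp
    have h1 : ∀ c ∈ univ.erase (0:F), χ c * χ (w - c) = χ (w * c⁻¹ - 1) := by
      intro c hc
      have hc0 : c ≠ 0 := (Finset.mem_erase.mp hc).1
      rw [← map_mul]
      have : c * (w - c) = c ^ 2 * (w * c⁻¹ - 1) := by field_simp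
      rw [this, map_mul, quadraticChar_sq_one' hc0, one_mul]
    rw [h0, Finset.sum_congr rfl h1]
    have h2 : ∑ c ∈ univ.erase (0:F), χ (w * c⁻¹ - 1)
        = ∑ s ∈ univ.erase (-1:F), χ s := by
      refine Finset.sum_nbij' (fun c => w * c⁻¹ - 1) (fun s => w * (s + 1)⁻¹) ?_ ?_ ?_ ?_ ?_
      · intro c hc
        have hc0 : c ≠ 0 := (Finset.mem_erase.mp hc).1
        refine Finset.mem_erase.mpr ⟨?_, mem_univ _⟩
        intro h
        have : w * c⁻¹ = 0 := by linear_combination h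
        exact hw (by field_simp at this; simpa using this)
      · intro s hs
        have hs1 : s ≠ -1 := (Finset.mem_erase.mp hs).1
        have hs1' : s + 1 ≠ 0 := fun h => hs1 (by linear_combination h)
        refine Finset.mem_erase.mpr ⟨?_, mem_univ _⟩
        exact mul_ne_zero hw (inv_ne_zero hs1')
      · intro c hc
        have hc0 : c ≠ 0 := (Finset.mem_erase.mp hc).1
        field_simp
        rw [sub_add_cancel, div_self hw]
      · intro s hs
        have hs1 : s ≠ -1 := (Finset.mem_erase.mp hs).1
        have hs1' : s + 1 ≠ 0 := fun h => hs1 (by linear_combination h)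
        field_simp
        ring
      · intro c hc; rfl
    rw [h2, Finset.sum_erase_eq_sub (mem_univ (-1:F)), quadraticChar_sum_zero hF2]
    ring

lemma two_var_sum (hF2 : ringChar F ≠ 2) {α β : F} (hα : α ≠ 0) (hβ : β ≠ 0) (c : F) :
    ∑ x : F, ∑ y : F, χ (c - α * x ^ 2 - β * y ^ 2)
      = q * χ (-(α * β)) * χ c := by
  have inner : ∀ x : F, ∑ y : F, χ (c - α * x ^ 2 - β * y ^ 2)
      = χ β * (χ (-1) * ((if c - α * x ^ 2 = 0 then q else 0) - 1)) := by
    intro x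
    have h := sum_alpha_sq hF2 hβ (fun v => χ (c - α * x ^ 2 - v))
    rw [h]
    have hz : ∑ u : F, χ (c - α * x ^ 2 - u) = 0 :=
      (Fintype.sum_equiv (Equiv.subLeft (c - α * x ^ 2))
        (fun u => χ (c - α * x ^ 2 - u)) (fun u => χ u) fun u => rfl).trans
        (quadraticChar_sum_zero hF2)
    rw [hz, zero_add, jacobi_sum hF2]
  rw [Finset.sum_congr rfl fun x _ => inner x]
  have hcount := sum_alpha_sq hF2 hα (fun u => if c - u = 0 then (1:ℤ) else 0)
  have h1 : ∑ u : F, (if c - u = 0 then (1:ℤ) else 0) = 1 := by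
    have : ∀ u : F, (if c - u = 0 then (1:ℤ) else 0) = if u = c then 1 else 0 := by
      intro u
      rw [if_congr (show (c - u = 0) ↔ u = c by rw [sub_eq_zero, eq_comm]) rfl rfl]
    rw [Finset.sum_congr rfl fun u _ => this u]; simp
  have h2 : ∑ u : F, χ u * (if c - u = 0 then (1:ℤ) else 0) = χ c := by
    have : ∀ u : F, χ u * (if c - u = 0 then (1:ℤ) else 0)
        = if u = c then χ u else 0 := by
      intro u
      by_cases h : u = c
      · simp [h]
      · have h' : ¬(c - u = 0) := fun hc => h (by linear_combination -hc)
        simp [h, h']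
    rw [Finset.sum_congr rfl fun u _ => this u]; simp
  have h3 : ∑ x : F, (if c - α * x ^ 2 = 0 then (1:ℤ) else 0) = 1 + χ α * χ c := by
    rw [hcount, h1, h2]
  have expand : ∀ x : F, χ β * (χ (-1) * ((if c - α * x ^ 2 = 0 then q else 0) - 1))
      = χ β * χ (-1) * q * (if c - α * x ^ 2 = 0 then (1:ℤ) else 0) - χ β * χ (-1) := by
    intro x; split <;> ring
  rw [Finset.sum_congr rfl fun x _ => expand x, Finset.sum_sub_distrib,
    ← Finset.mul_sum, h3, Finset.sum_const, Finset.card_univ, nsmul_eq_mul]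
  have hm : χ (-(α * β)) = χ (-1) * χ α * χ β := by
    rw [show -(α * β) = -1 * α * β by ring, map_mul, map_mul]
  rw [hm]
  ring

lemma sum_succ_pi {m : ℕ} (g : (Fin (m + 1) → F) → ℤ) :
    ∑ x : Fin (m + 1) → F, g x = ∑ t : F, ∑ z : Fin m → F, g (Fin.cons t z) :=
  ((Fintype.sum_equiv (Fin.consEquiv fun _ => F)
    (fun p => g (Fin.cons p.1 p.2)) g fun p => rfl).symm).trans
    (Fintype.sum_prod_type (f := fun p : F × (Fin m → F) => g (Fin.cons p.1 p.2)))

lemma step2 (m : ℕ) (a : Fin (m + 1 + 1) → F) (N : F → ℤ)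
    (hN : ∀ u : F, ∑ z : Fin m → F,
      (if (∑ i : Fin m, a i.succ.succ * z i ^ 2) = u then (1:ℤ) else 0) = N u)
    (c : F) :
    ∑ x : Fin (m + 1 + 1) → F, (if (∑ i, a i * x i ^ 2) = c then (1:ℤ) else 0)
      = ∑ s : F, ∑ t : F, N (c - a 0 * s ^ 2 - a 1 * t ^ 2) := by
  rw [sum_succ_pi]
  refine Finset.sum_congr rfl fun s _ => ?_
  rw [sum_succ_pi]
  refine Finset.sum_congr rfl fun t _ => ?_
  rw [← hN (c - a 0 * s ^ 2 - a 1 * t ^ 2)]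
  refine Finset.sum_congr rfl fun z _ => ?_
  have hsum : (∑ i, a i * (Fin.cons s (Fin.cons t z) : Fin (m + 1 + 1) → F) i ^ 2)
      = a 0 * s ^ 2 + a 1 * t ^ 2 + ∑ i : Fin m, a i.succ.succ * z i ^ 2 := by
    rw [Fin.sum_univ_succ]
    simp only [Fin.cons_zero, Fin.cons_succ]
    rw [Fin.sum_univ_succ]
    simp only [Fin.cons_zero, Fin.cons_succ, Fin.succ_zero_eq_one]
    ring
  rw [hsum]
  exact if_congr (by constructor <;> intro h <;> linear_combination h) rfl rfl

lemma count_diag (hF2 : ringChar F ≠ 2) :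
    ∀ (k : ℕ) (a : Fin (2 * k + 1) → F), (∀ i, a i ≠ 0) → ∀ c : F,
    ∑ x : Fin (2 * k + 1) → F, (if (∑ i, a i * x i ^ 2) = c then (1:ℤ) else 0)
      = q ^ (2 * k) + q ^ k * χ ((-1) ^ k * ∏ i, a i) * χ c := by
  intro k
  induction k with
  | zero =>
    intro a ha c
    show ∑ x : Fin (0 + 1) → F, (if (∑ i, a i * x i ^ 2) = c then (1:ℤ) else 0)
      = q ^ (2 * 0) + q ^ 0 * χ ((-1) ^ 0 * ∏ i : Fin (0 + 1), a i) * χ c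
    rw [sum_succ_pi]
    have h2 : ∀ t : F, ∑ z : Fin 0 → F,
        (if (∑ i, a i * (Fin.cons t z : Fin (0 + 1) → F) i ^ 2) = c then (1:ℤ) else 0)
        = (if a 0 * t ^ 2 = c then (1:ℤ) else 0) := by
      intro t
      rw [Fintype.sum_unique]
      congr 1
      simp [Fin.sum_univ_one]
    refine Eq.trans (Finset.sum_congr rfl fun t _ => h2 t) ?_
    have h3 : ∑ t : F, (if a 0 * t ^ 2 = c then (1:ℤ) else 0)
        = (∑ u : F, if u = c then (1:ℤ) else 0)
          + χ (a 0) * ∑ u : F, χ u * (if u = c then (1:ℤ) else 0) :=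
      sum_alpha_sq hF2 (ha 0) (fun u => if u = c then (1:ℤ) else 0)
    have h5 : ∑ u : F, (if u = c then (1:ℤ) else 0) = 1 := by simp
    have h6 : ∑ u : F, χ u * (if u = c then (1:ℤ) else 0) = χ c := by
      have : ∀ u : F, χ u * (if u = c then (1:ℤ) else 0) = if u = c then χ u else 0 := by
        intro u; split <;> ring
      rw [Finset.sum_congr rfl fun u _ => this u]; simp
    rw [h3, h5, h6]
    simp [Fin.prod_univ_one]
  | succ k ih =>
    intro a ha c
    refine (step2 (2 * k + 1) a
        (fun u => q ^ (2 * k) + q ^ k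
          * χ ((-1) ^ k * ∏ i : Fin (2 * k + 1), a (Fin.succ (Fin.succ i))) * χ u)
        (fun u => ih (fun i => a i.succ.succ) (fun i => ha _) u) c).trans ?_
    have hprod : ((-1 : F)) ^ (k + 1) * (∏ i, a i)
        = (-(a 0 * a 1)) * ((-1) ^ k * ∏ i : Fin (2 * k + 1), a (Fin.succ (Fin.succ i))) := by
      have h1 : (∏ i : Fin (2 * k + 1 + 1 + 1), a i)
          = a 0 * (a 1 * ∏ i : Fin (2 * k + 1), a (Fin.succ (Fin.succ i))) := by
        rw [Fin.prod_univ_succ, Fin.prod_univ_succ, Fin.succ_zero_eq_one]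
      have h2 : ((-1 : F)) ^ (k + 1) * (∏ i : Fin (2 * k + 1 + 1 + 1), a i)
          = (-(a 0 * a 1)) * ((-1) ^ k * ∏ i : Fin (2 * k + 1), a (Fin.succ (Fin.succ i))) := by
        rw [h1]; ring
      exact h2
    have hchi : χ ((-1) ^ (k + 1) * ∏ i, a i)
        = χ (-(a 0 * a 1))
          * χ ((-1) ^ k * ∏ i : Fin (2 * k + 1), a (Fin.succ (Fin.succ i))) := by
      rw [hprod, map_mul]
    have hsplit : ∑ s : F, ∑ t : F,
        (q ^ (2 * k) + q ^ k
          * χ ((-1) ^ k * ∏ i : Fin (2 * k + 1), a (Fin.succ (Fin.succ i)))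
          * χ (c - a 0 * s ^ 2 - a 1 * t ^ 2))
        = q * (q * q ^ (2 * k))
          + q ^ k * χ ((-1) ^ k * ∏ i : Fin (2 * k + 1), a (Fin.succ (Fin.succ i)))
            * ∑ s : F, ∑ t : F, χ (c - a 0 * s ^ 2 - a 1 * t ^ 2) := by
      have inner : ∀ s : F, ∑ t : F,
          (q ^ (2 * k) + q ^ k
            * χ ((-1) ^ k * ∏ i : Fin (2 * k + 1), a (Fin.succ (Fin.succ i)))
            * χ (c - a 0 * s ^ 2 - a 1 * t ^ 2))
          = q * q ^ (2 * k) + q ^ k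
            * χ ((-1) ^ k * ∏ i : Fin (2 * k + 1), a (Fin.succ (Fin.succ i)))
            * ∑ t : F, χ (c - a 0 * s ^ 2 - a 1 * t ^ 2) := by
        intro s
        rw [Finset.sum_add_distrib, Finset.sum_const, Finset.card_univ,
          nsmul_eq_mul, ← Finset.mul_sum]
      refine Eq.trans (Finset.sum_congr rfl fun s _ => inner s) ?_
      rw [Finset.sum_add_distrib, Finset.sum_const, Finset.card_univ,
        nsmul_eq_mul, ← Finset.mul_sum]
    refine hsplit.trans ?_
    rw [two_var_sum hF2 (ha 0) (ha 1) c, hchi]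
    have e1 : (q : ℤ) ^ (2 * (k + 1)) = q * (q * q ^ (2 * k)) := by
      rw [show 2 * (k + 1) = 2 * k + 1 + 1 by ring, pow_succ, pow_succ]; ring
    have e2 : (q : ℤ) ^ (k + 1) = q ^ k * q := pow_succ q k
    rw [e1, e2]
    ring

end Helpers

open scoped Classical in
/-- The quadratic character of a finite field. -/
noncomputable def quadChar (F : Type*) [Field F] (x : F) : ℤ :=
  if x = 0 then 0 else if IsSquare x then 1 else -1

theorem stmt_10 (F : Type*) [Field F] [Fintype F] (hq : Odd (Fintype.card F))
    (n : ℕ) (hn : 2 ≤ n) (hno : Odd n)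
    (a b : Fin n → F) (ha : ∀ i, a i ≠ 0) (hb : ∃ i, b i ≠ 0) (a0 b0 : F)
    (hB : (∑ i, (b i) ^ 2 * (a i)⁻¹) ≠ 0)
    (hc : b0 ^ 2 - a0 * (∑ i, (b i) ^ 2 * (a i)⁻¹) = 0) :
    (Nat.card {x : Fin n → F //
        (∑ i, a i * (x i) ^ 2) = a0 ∧ (∑ i, b i * x i) = b0} : ℤ)
      = (Fintype.card F : ℤ) ^ (n - 2)
        + (Fintype.card F : ℤ) ^ ((n - 3) / 2) * ((Fintype.card F : ℤ) - 1)
          * quadChar F ((-1 : F) ^ ((n - 1) / 2) * (∏ i, a i)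
              * (∑ i, (b i) ^ 2 * (a i)⁻¹)) := by
  classical
  obtain ⟨m, hm⟩ := hno
  obtain ⟨j, rfl⟩ : ∃ j, m = j + 1 := ⟨m - 1, by omega⟩
  subst hm
  have e1 : 2 * (j + 1) + 1 - 2 = 2 * j + 1 := by omega
  have e2 : (2 * (j + 1) + 1 - 3) / 2 = j := by omega
  have e3 : (2 * (j + 1) + 1 - 1) / 2 = j + 1 := by omega
  have hF2 : ringChar F ≠ 2 := by
    intro h
    have h2 := FiniteField.even_card_of_char_two h
    rw [Nat.odd_iff] at hq
    omega
  have hq0 : (Fintype.card F : ℤ) ≠ 0 := by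
    exact_mod_cast Fintype.card_ne_zero
  have hqc : ∀ y : F, quadChar F y = quadraticChar F y := by
    intro y
    unfold quadChar
    rw [quadraticChar_apply]
    unfold quadraticCharFun
    split_ifs <;> rfl
  set B := ∑ i, (b i) ^ 2 * (a i)⁻¹ with hBdef
  set w : Fin (2 * (j + 1) + 1) → F := fun i => b i * (a i)⁻¹ with hwdef
  have hw1 : ∀ i, a i * w i = b i := by
    intro i
    rw [hwdef]
    rw [show a i * ((fun i => b i * (a i)⁻¹) i) = b i * (a i * (a i)⁻¹) from by ring,
      mul_inv_cancel₀ (ha i), mul_one]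
  have hw2 : ∀ i, a i * w i ^ 2 = b i ^ 2 * (a i)⁻¹ := by
    intro i
    rw [hwdef]
    rw [show a i * ((fun i => b i * (a i)⁻¹) i) ^ 2
        = (b i ^ 2 * (a i)⁻¹) * (a i * (a i)⁻¹) from by ring,
      mul_inv_cancel₀ (ha i), mul_one]
  have hw3 : ∀ i, b i * w i = b i ^ 2 * (a i)⁻¹ := by
    intro i; rw [hwdef]; ring
  -- expansion lemmas
  have hQexp : ∀ (t : F) (x : Fin (2 * (j + 1) + 1) → F),
      (∑ i, a i * (x i + t * w i) ^ 2)
        = (∑ i, a i * x i ^ 2) + 2 * t * (∑ i, b i * x i) + t ^ 2 * B := by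
    intro t x
    have hpt : ∀ i, a i * (x i + t * w i) ^ 2
        = a i * x i ^ 2 + 2 * t * (b i * x i) + t ^ 2 * (b i ^ 2 * (a i)⁻¹) := by
      intro i
      calc a i * (x i + t * w i) ^ 2
          = a i * x i ^ 2 + 2 * t * ((a i * w i) * x i) + t ^ 2 * (a i * w i ^ 2) := by
            ring
        _ = _ := by rw [hw1 i, hw2 i]
    rw [Finset.sum_congr rfl fun i _ => hpt i, Finset.sum_add_distrib,
      Finset.sum_add_distrib, ← Finset.mul_sum, ← Finset.mul_sum, ← hBdef]
  have hLexp : ∀ (t : F) (x : Fin (2 * (j + 1) + 1) → F),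
      (∑ i, b i * (x i + t * w i)) = (∑ i, b i * x i) + t * B := by
    intro t x
    have hpt : ∀ i, b i * (x i + t * w i)
        = b i * x i + t * (b i ^ 2 * (a i)⁻¹) := by
      intro i; rw [← hw3 i]; ring
    rw [Finset.sum_congr rfl fun i _ => hpt i, Finset.sum_add_distrib,
      ← Finset.mul_sum, ← hBdef]
  set Mf : F → ℤ := fun u => ∑ x : Fin (2 * (j + 1) + 1) → F,
    (if (∑ i, b i * x i) = 0 ∧ (∑ i, a i * x i ^ 2) = u then (1:ℤ) else 0) with hMdef
  have hNform : ∀ c : F,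
      ∑ x : Fin (2 * (j + 1) + 1) → F,
        (if (∑ i, a i * x i ^ 2) = c then (1:ℤ) else 0)
      = (Fintype.card F : ℤ) ^ (2 * (j + 1)) + (Fintype.card F : ℤ) ^ (j + 1)
          * quadraticChar F ((-1) ^ (j + 1) * ∏ i, a i) * quadraticChar F c :=
    count_diag hF2 (j + 1) a ha
  -- orthogonal decomposition
  have hF2sum : ∀ c : F, ∑ t : F, Mf (c - t ^ 2 * B)
      = ∑ x : Fin (2 * (j + 1) + 1) → F,
          (if (∑ i, a i * x i ^ 2) = c then (1:ℤ) else 0) := by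
    intro c
    have step1 : ∀ t : F, Mf (c - t ^ 2 * B)
        = ∑ y : Fin (2 * (j + 1) + 1) → F,
            (if (∑ i, b i * y i) = t * B ∧ (∑ i, a i * y i ^ 2) = c
              then (1:ℤ) else 0) := by
      intro t
      simp only [hMdef]
      refine Fintype.sum_equiv (Equiv.addRight (fun i => t * w i)) _ _ fun x => ?_
      have hx : ∀ i, (Equiv.addRight (fun i => t * w i) x) i = x i + t * w i :=
        fun i => rfl
      have hL : (∑ i, b i * (Equiv.addRight (fun i => t * w i) x) i)
          = (∑ i, b i * x i) + t * B := by
        rw [Finset.sum_congr rfl fun i _ => by rw [hx i]]; exact hLexp t x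
      have hQ : (∑ i, a i * (Equiv.addRight (fun i => t * w i) x) i ^ 2)
          = (∑ i, a i * x i ^ 2) + 2 * t * (∑ i, b i * x i) + t ^ 2 * B := by
        rw [Finset.sum_congr rfl fun i _ => by rw [hx i]]; exact hQexp t x
      rw [hL, hQ]
      refine if_congr ?_ rfl rfl
      constructor
      · rintro ⟨h1, h2⟩
        constructor
        · linear_combination h1
        · linear_combination h2 + 2 * t * h1
      · rintro ⟨h1, h2⟩
        constructor
        · linear_combination h1
        · linear_combination h2 - 2 * t * h1
    refine Eq.trans (Finset.sum_congr rfl fun t _ => step1 t) ?_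
    rw [Finset.sum_comm]
    refine Finset.sum_congr rfl fun y _ => ?_
    have hiff : ∀ t : F,
        ((∑ i, b i * y i) = t * B ∧ (∑ i, a i * y i ^ 2) = c)
          ↔ (t = (∑ i, b i * y i) * B⁻¹ ∧ (∑ i, a i * y i ^ 2) = c) := by
      intro t
      constructor
      · rintro ⟨h1, h2⟩
        refine ⟨?_, h2⟩
        rw [h1]; field_simp
      · rintro ⟨h1, h2⟩
        refine ⟨?_, h2⟩
        rw [h1]; field_simp
    rw [Finset.sum_congr rfl fun t _ => if_congr (hiff t) rfl rfl]
    by_cases hQ : (∑ i, a i * y i ^ 2) = c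
    · simp [hQ]
    · simp [hQ]
  have hNsum : ∑ c : F, (∑ x : Fin (2 * (j + 1) + 1) → F,
      (if (∑ i, a i * x i ^ 2) = c then (1:ℤ) else 0))
      = (Fintype.card F : ℤ) * (Fintype.card F : ℤ) ^ (2 * (j + 1)) := by
    rw [Finset.sum_congr rfl fun c _ => hNform c, Finset.sum_add_distrib,
      Finset.sum_const, Finset.card_univ, nsmul_eq_mul, ← Finset.mul_sum]
    rw [quadraticChar_sum_zero hF2]
    ring
  have hMsum : ∑ u : F, Mf u = (Fintype.card F : ℤ) ^ (2 * (j + 1)) := by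
    have h1 : ∑ c : F, ∑ t : F, Mf (c - t ^ 2 * B)
        = (Fintype.card F : ℤ) * (Fintype.card F : ℤ) ^ (2 * (j + 1)) := by
      rw [Finset.sum_congr rfl fun c _ => hF2sum c]; exact hNsum
    rw [Finset.sum_comm] at h1
    have h2 : ∀ t : F, ∑ c : F, Mf (c - t ^ 2 * B) = ∑ u : F, Mf u :=
      fun t => Fintype.sum_equiv (Equiv.subRight (t ^ 2 * B))
        (fun c => Mf (c - t ^ 2 * B)) Mf fun c => rfl
    rw [Finset.sum_congr rfl fun t _ => h2 t, Finset.sum_const, Finset.card_univ,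
      nsmul_eq_mul] at h1
    exact mul_left_cancel₀ hq0 h1
  have hMc : ∀ c : F, ∑ u : F, Mf (c - u) = (Fintype.card F : ℤ) ^ (2 * (j + 1)) := by
    intro c
    rw [← hMsum]
    exact Fintype.sum_equiv (Equiv.subLeft c) (fun u => Mf (c - u)) Mf fun u => rfl
  set ε := quadraticChar F ((-1) ^ (j + 1) * ∏ i, a i) with hεdef
  have hχB : quadraticChar F B * quadraticChar F B = 1 := by
    rw [← sq]; exact quadraticChar_sq_one hB
  have hχ1 : quadraticChar F (-1 : F) * quadraticChar F (-1 : F) = 1 := by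
    rw [← sq]; exact quadraticChar_sq_one (neg_ne_zero.mpr one_ne_zero)
  have hTform : ∀ c : F, ∑ u : F, quadraticChar F u * Mf (c - u)
      = quadraticChar F B * ((Fintype.card F : ℤ) ^ (j + 1) * ε * quadraticChar F c) := by
    intro c
    have h1 : ∑ x : Fin (2 * (j + 1) + 1) → F,
        (if (∑ i, a i * x i ^ 2) = c then (1:ℤ) else 0)
        = (Fintype.card F : ℤ) ^ (2 * (j + 1))
          + quadraticChar F B * ∑ u : F, quadraticChar F u * Mf (c - u) := by
      rw [← hF2sum c]
      have h2 : ∀ t : F, Mf (c - t ^ 2 * B) = (fun u => Mf (c - u)) (B * t ^ 2) := by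
        intro t; simp only; rw [mul_comm B (t ^ 2)]
      refine Eq.trans (Finset.sum_congr rfl fun t _ => h2 t) ?_
      rw [sum_alpha_sq hF2 hB (fun u => Mf (c - u))]
      rw [hMc c]
    have h3 := hNform c
    rw [h1] at h3
    have h4 : quadraticChar F B * ∑ u : F, quadraticChar F u * Mf (c - u)
        = (Fintype.card F : ℤ) ^ (j + 1) * ε * quadraticChar F c := by
      rw [hεdef]; linear_combination h3
    calc ∑ u : F, quadraticChar F u * Mf (c - u)
        = (quadraticChar F B * quadraticChar F B)
          * ∑ u : F, quadraticChar F u * Mf (c - u) := by rw [hχB]; ring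
      _ = _ := by rw [mul_assoc, h4]
  have hU1 : ∑ c : F, quadraticChar F (-c) * ∑ u : F, quadraticChar F u * Mf (c - u)
      = quadraticChar F (-1 : F)
        * ((Fintype.card F : ℤ) * Mf 0 - (Fintype.card F : ℤ) ^ (2 * (j + 1))) := by
    have hin : ∀ c : F, quadraticChar F (-c) * ∑ u : F, quadraticChar F u * Mf (c - u)
        = ∑ v : F, quadraticChar F (-c) * (quadraticChar F (c - v) * Mf v) := by
      intro c
      rw [Finset.mul_sum]
      exact (Fintype.sum_equiv (Equiv.subLeft c)
        (fun v => quadraticChar F (-c) * (quadraticChar F (c - v) * Mf v))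
        (fun u => quadraticChar F (-c) * (quadraticChar F u * Mf (c - u)))
        fun v => by simp only [Equiv.subLeft_apply, sub_sub_cancel]).symm
    refine Eq.trans (Finset.sum_congr rfl fun c _ => hin c) ?_
    rw [Finset.sum_comm]
    have hK : ∀ v : F, ∑ c : F, quadraticChar F (-c) * (quadraticChar F (c - v) * Mf v)
        = (quadraticChar F (-1 : F)
            * ((if v = 0 then (Fintype.card F : ℤ) else 0) - 1)) * Mf v := by
      intro v
      have hpt : ∀ c : F, quadraticChar F (-c) * (quadraticChar F (c - v) * Mf v)
          = (quadraticChar F c * quadraticChar F (v - c)) * Mf v := by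
        intro c
        rw [← mul_assoc, ← map_mul, show (-c) * (c - v) = c * (v - c) from by ring,
          map_mul]
      rw [Finset.sum_congr rfl fun c _ => hpt c, ← Finset.sum_mul, jacobi_sum hF2 v]
    refine Eq.trans (Finset.sum_congr rfl fun v _ => hK v) ?_
    have hexp : ∀ v : F,
        (quadraticChar F (-1 : F) * ((if v = 0 then (Fintype.card F : ℤ) else 0) - 1)) * Mf v
        = quadraticChar F (-1 : F) * (Fintype.card F : ℤ) * (if v = 0 then Mf v else 0)
          - quadraticChar F (-1 : F) * Mf v := by
      intro v; split <;> ring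
    rw [Finset.sum_congr rfl fun v _ => hexp v, Finset.sum_sub_distrib,
      ← Finset.mul_sum, ← Finset.mul_sum, Finset.sum_ite_eq' Finset.univ (0:F) Mf,
      if_pos (Finset.mem_univ _), hMsum]
    ring
  have hU2 : ∑ c : F, quadraticChar F (-c) * ∑ u : F, quadraticChar F u * Mf (c - u)
      = quadraticChar F B * ε * (Fintype.card F : ℤ) ^ (j + 1)
        * (quadraticChar F (-1 : F) * ((Fintype.card F : ℤ) - 1)) := by
    have hpt : ∀ c : F, quadraticChar F (-c) * ∑ u : F, quadraticChar F u * Mf (c - u)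
        = (quadraticChar F B * ε * (Fintype.card F : ℤ) ^ (j + 1)
            * quadraticChar F (-1 : F)) * (quadraticChar F c * quadraticChar F c) := by
      intro c
      rw [hTform c, show (-c : F) = -1 * c from by ring, map_mul]
      ring
    rw [Finset.sum_congr rfl fun c _ => hpt c, ← Finset.mul_sum, chi_sq_sum hF2]
    ring
  have hkey : (Fintype.card F : ℤ) * Mf 0
      = (Fintype.card F : ℤ) ^ (2 * (j + 1))
        + quadraticChar F B * ε * (Fintype.card F : ℤ) ^ (j + 1)
          * ((Fintype.card F : ℤ) - 1) := by
    have h := hU1.symm.trans hU2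
    linear_combination quadraticChar F (-1 : F) * h
      - ((Fintype.card F : ℤ) * Mf 0 - (Fintype.card F : ℤ) ^ (2 * (j + 1))
          - quadraticChar F B * ε * (Fintype.card F : ℤ) ^ (j + 1)
            * ((Fintype.card F : ℤ) - 1)) * hχ1
  -- the affine translation: solution count equals Mf 0
  have hA : (∑ x : Fin (2 * (j + 1) + 1) → F,
      (if (∑ i, a i * x i ^ 2) = a0 ∧ (∑ i, b i * x i) = b0 then (1:ℤ) else 0))
      = Mf 0 := by
    have hb2 : b0 ^ 2 = a0 * B := by linear_combination hc
    set s : F := b0 * B⁻¹ with hsdef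
    have hs1 : s * B = b0 := by rw [hsdef]; field_simp
    have hs2 : s ^ 2 * B = a0 := by
      rw [hsdef]
      have h1 : (b0 * B⁻¹) ^ 2 * B = b0 ^ 2 * (B⁻¹ * (B⁻¹ * B)) := by ring
      rw [h1, inv_mul_cancel₀ hB, mul_one, hb2, mul_assoc,
        mul_inv_cancel₀ hB, mul_one]
    simp only [hMdef]
    refine Fintype.sum_equiv (Equiv.addRight (fun i => (-s) * w i)) _ _ fun x => ?_
    have hx : ∀ i, (Equiv.addRight (fun i => (-s) * w i) x) i = x i + (-s) * w i :=
      fun i => rfl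
    have hL : (∑ i, b i * (Equiv.addRight (fun i => (-s) * w i) x) i)
        = (∑ i, b i * x i) + (-s) * B := by
      rw [Finset.sum_congr rfl fun i _ => by rw [hx i]]; exact hLexp (-s) x
    have hQ : (∑ i, a i * (Equiv.addRight (fun i => (-s) * w i) x) i ^ 2)
        = (∑ i, a i * x i ^ 2) + 2 * (-s) * (∑ i, b i * x i) + (-s) ^ 2 * B := by
      rw [Finset.sum_congr rfl fun i _ => by rw [hx i]]; exact hQexp (-s) x
    rw [hL, hQ]
    refine if_congr ?_ rfl rfl
    constructor
    · rintro ⟨h1, h2⟩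
      constructor
      · linear_combination h2 - hs1
      · linear_combination h1 - 2 * s * h2 + 2 * s * hs1 - hs2
    · rintro ⟨h1, h2⟩
      constructor
      · linear_combination h2 + 2 * s * h1 + hs2
      · linear_combination h1 + hs1
  have hcount : (Nat.card {x : Fin (2 * (j + 1) + 1) → F //
      (∑ i, a i * (x i) ^ 2) = a0 ∧ (∑ i, b i * x i) = b0} : ℤ)
      = ∑ x : Fin (2 * (j + 1) + 1) → F,
        (if (∑ i, a i * x i ^ 2) = a0 ∧ (∑ i, b i * x i) = b0 then (1:ℤ) else 0) := by
    rw [Nat.card_eq_fintype_card, Fintype.card_subtype, Finset.card_filter]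
    push_cast
    rfl
  rw [hcount, hA, hqc]
  rw [e1, e2, e3]
  rw [map_mul, ← hεdef]
  refine mul_left_cancel₀ hq0 ?_
  rw [hkey]
  rw [(show 2 * (j + 1) = 2 * j + 1 + 1 by ring), pow_succ,
    pow_succ (Fintype.card F : ℤ) j]
  ring
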